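/- Let P ∈ ℤ[x] be a nonconstant polynomial such that P(n) is a perfect square for all sufficiently large positive integers n. Then there exists a polynomial Q ∈ ℤ[x] such that P = Q². -/

import Mathlib

open Polynomial Filter fwdDiff

noncomputable section SquarePoly



/-- finite difference of a polynomial -/
def dPoly {R : Type*} [CommRing R] (q : R[X]) : R[X] := q.comp (X + 1) - q

lemma eval_dPoly {R : Type*} [CommRing R] (q : R[X]) (x : R) :
    (dPoly q).eval x = q.eval (x + 1) - q.eval x := by
  simp [dPoly, eval_comp]

lemma dPoly_degree_lt {R : Type*} [CommRing R] [IsDomain R] (q : R[X]) (hq : 0 < q.degree) :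
    (dPoly q).degree < q.degree := by
  have hq0 : q ≠ 0 := fun h => by simp [h] at hq
  have hnd : (q.comp (X + 1)).natDegree = q.natDegree := by
    rw [natDegree_comp]
    have : ((X + 1 : R[X])).natDegree = 1 := by
      simpa using natDegree_X_add_C (1 : R)
    simp [this]
  have hlc : (q.comp (X + 1)).leadingCoeff = q.leadingCoeff := by
    have h1 : ((X + 1 : R[X])).natDegree ≠ 0 := by
      have : ((X + 1 : R[X])).natDegree = 1 := by simpa using natDegree_X_add_C (1 : R)
      omega
    rw [leadingCoeff_comp h1]
    have : ((X + 1 : R[X])).leadingCoeff = 1 := by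
      simpa using leadingCoeff_X_add_C (1 : R)
    simp [this]
  have hc0 : q.comp (X + 1) ≠ 0 := by
    intro h
    apply hq0
    rw [← leadingCoeff_eq_zero, ← hlc, h, leadingCoeff_zero]
  have hdeg : (q.comp (X + 1)).degree = q.degree := by
    rw [degree_eq_natDegree hc0, degree_eq_natDegree hq0, hnd]
  calc (dPoly q).degree < (q.comp (X + 1)).degree :=
        degree_sub_lt hdeg hc0 hlc
    _ = q.degree := hdeg

lemma dPoly_iter_eq_zero {R : Type*} [CommRing R] [IsDomain R] (j : ℕ) (q : R[X])
    (h : q.degree < j) : dPoly^[j] q = 0 := by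
  induction j generalizing q with
  | zero =>
    have : q.degree < 0 := by simpa using h
    rw [Nat.WithBot.lt_zero_iff] at this
    simpa [degree_eq_bot] using this
  | succ j ih =>
    rw [Function.iterate_succ_apply]
    rcases le_or_gt q.degree 0 with hd | hd
    · have : dPoly q = 0 := by
        rw [dPoly, eq_C_of_degree_le_zero hd]
        simp
      rw [this]
      apply ih
      simp [degree_zero]
    · apply ih
      have h1 := dPoly_degree_lt q hd
      have h2 : q.degree < (j + 1 : ℕ) := h
      have h3 : q.degree ≤ (j : ℕ) := by
        rcases hdq : q.degree with _ | n
        · exact bot_le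
        · rw [hdq] at h2
          rw [Nat.cast_withBot] at h2 ⊢
          exact WithBot.coe_le_coe.mpr (Nat.lt_succ_iff.mp (WithBot.coe_lt_coe.mp h2))
      exact lt_of_lt_of_le h1 h3

lemma fwdDiff_iter_eval {R : Type*} [CommRing R] (q : R[X]) (j : ℕ) :
    (fwdDiff 1)^[j] (fun n : ℕ => q.eval (n : R)) = fun n : ℕ => (dPoly^[j] q).eval (n : R) := by
  induction j generalizing q with
  | zero => simp
  | succ j ih =>
    rw [Function.iterate_succ_apply]
    have : fwdDiff 1 (fun n : ℕ => q.eval (n : R)) = fun n : ℕ => (dPoly q).eval (n : R) := by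
      funext n
      simp [fwdDiff, eval_dPoly, Nat.cast_add]
    rw [this, ih, Function.iterate_succ_apply]

lemma tendsto_fwdDiff_iter_zero (f : ℕ → ℝ) (j : ℕ)
    (hf : Tendsto f atTop (nhds 0)) : Tendsto ((fwdDiff 1)^[j] f) atTop (nhds 0) := by
  induction j generalizing f with
  | zero => simpa
  | succ j ih =>
    rw [Function.iterate_succ_apply]
    apply ih
    have h1 : Tendsto (fun n => f (n + 1)) atTop (nhds 0) :=
      hf.comp (tendsto_add_atTop_nat 1)
    have := h1.sub hf
    rw [sub_zero] at this
    exact this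

lemma fwdDiff_iter_intCast (G : ℕ → ℤ) (j : ℕ) :
    (fun n => (((fwdDiff 1)^[j] G n : ℤ) : ℝ)) = (fwdDiff 1)^[j] (fun n => (G n : ℝ)) := by
  induction j with
  | zero => rfl
  | succ j ih =>
    funext n
    rw [Function.iterate_succ_apply', Function.iterate_succ_apply']
    simp only [fwdDiff]
    push_cast
    rw [← congrFun ih (n + 1), ← congrFun ih n]

lemma fwdDiff_iter_eventually_zero {G : Type*} [AddCommGroup G] (f : ℕ → G) (M : ℕ) (j : ℕ)
    (h : ∀ n, M ≤ n → f n = 0) : ∀ n, M ≤ n → (fwdDiff 1)^[j] f n = 0 := by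
  induction j with
  | zero => simpa
  | succ j ih =>
    intro n hn
    rw [Function.iterate_succ_apply']
    have h1 := ih n hn
    have h2 := ih (n + 1) (by omega)
    simp [fwdDiff, h1, h2]





lemma wb_le {x y : ℕ} (h : x ≤ y) : (x : WithBot ℕ) ≤ (y : WithBot ℕ) := by
  rw [Nat.cast_withBot, Nat.cast_withBot]; exact WithBot.coe_le_coe.mpr h

lemma wb_lt {x y : ℕ} (h : x < y) : (x : WithBot ℕ) < (y : WithBot ℕ) := by
  rw [Nat.cast_withBot, Nat.cast_withBot]; exact WithBot.coe_lt_coe.mpr h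

lemma exists_sqrt_approx (p : ℝ[X]) (m : ℕ) (hm : 0 < m) (hdeg : p.natDegree = 2 * m)
    (hlc : 0 < p.leadingCoeff) :
    ∃ Qt : ℝ[X], Qt.natDegree = m ∧ Qt.leadingCoeff = Real.sqrt p.leadingCoeff ∧
      (p - Qt ^ 2).degree < (m : WithBot ℕ) := by
  have hp0 : p ≠ 0 := fun h => by simp [h] at hlc
  set a := p.leadingCoeff with ha
  have hsa : 0 < Real.sqrt a := Real.sqrt_pos.mpr hlc
  have hsa' : Real.sqrt a ≠ 0 := ne_of_gt hsa
  have key : ∀ j : ℕ, j ≤ m → ∃ Qt : ℝ[X], Qt.degree ≤ (m : WithBot ℕ) ∧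
      Qt.coeff m = Real.sqrt a ∧ ∀ k : ℕ, 2 * m - j ≤ k → (p - Qt ^ 2).coeff k = 0 := by
    intro j
    induction j with
    | zero =>
      intro _
      refine ⟨C (Real.sqrt a) * X ^ m, degree_C_mul_X_pow_le _ _, by simp [coeff_C_mul, coeff_X_pow], ?_⟩
      intro k hk
      have hsq : (C (Real.sqrt a) * X ^ m) ^ 2 = C a * X ^ (2 * m) := by
        rw [mul_pow, ← C_pow, ← pow_mul, Real.sq_sqrt hlc.le]
        ring_nf
      rw [hsq]
      have h1 : (C a * X ^ (2 * m)).degree = ((2 * m : ℕ) : WithBot ℕ) :=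
        degree_C_mul_X_pow _ (ne_of_gt hlc)
      have h2 : p.degree = ((2 * m : ℕ) : WithBot ℕ) := by
        rw [degree_eq_natDegree hp0, hdeg]
      have h3 : p.leadingCoeff = (C a * X ^ (2 * m)).leadingCoeff := by
        rw [leadingCoeff_C_mul_X_pow, ha]
      have hdlt : (p - C a * X ^ (2 * m)).degree < ((2 * m : ℕ) : WithBot ℕ) := by
        calc (p - C a * X ^ (2 * m)).degree < p.degree := degree_sub_lt (h2.trans h1.symm) hp0 h3
          _ = _ := h2
      exact coeff_eq_zero_of_degree_lt (lt_of_lt_of_le hdlt (wb_le (by omega)))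
    | succ j ih =>
      intro hj1
      obtain ⟨Qt, hQd, hQm, hQco⟩ := ih (by omega)
      obtain ⟨e, he⟩ : ∃ e, m = j + 1 + e := ⟨m - (j + 1), by omega⟩
      set r := (p - Qt ^ 2).coeff (e + m) with hr
      set t := r / (2 * Real.sqrt a) with ht
      refine ⟨Qt + C t * X ^ e, ?_, ?_, ?_⟩
      · exact le_trans (degree_add_le _ _)
          (max_le hQd (le_trans (degree_C_mul_X_pow_le _ _) (wb_le (by omega))))
      · rw [coeff_add, hQm, coeff_C_mul, coeff_X_pow, if_neg (by omega : ¬ m = e)]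
        ring
      · intro k hk
        have hk' : e + m ≤ k := by omega
        have hexp : p - (Qt + C t * X ^ e) ^ 2
            = (p - Qt ^ 2) - C t * (X ^ e * Qt) - C t * (X ^ e * Qt)
              - C t * (C t * X ^ (2 * e)) := by
          ring
        rw [hexp]
        have hcoeffQt : ∀ i : ℕ, m < i → Qt.coeff i = 0 := fun i hi =>
          coeff_eq_zero_of_degree_lt (lt_of_le_of_lt hQd (wb_lt hi))
        have h2e : (C t * (C t * X ^ (2 * e))).coeff k = 0 := by
          rw [coeff_C_mul, coeff_C_mul, coeff_X_pow, if_neg (by omega : ¬ k = 2 * e)]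
          ring
        have hXe : (X ^ e * Qt).coeff k = Qt.coeff (k - e) := by
          conv_lhs => rw [show k = (k - e) + e by omega]
          rw [coeff_X_pow_mul]
        rcases eq_or_lt_of_le hk' with heq | hlt
        · have hkm : k - e = m := by omega
          rw [coeff_sub, coeff_sub, coeff_sub, h2e, coeff_C_mul, hXe, hkm, hQm, ← heq, ← hr, ht]
          field_simp
          ring
        · have h1 : (p - Qt ^ 2).coeff k = 0 := hQco k (by omega)
          have h2 : Qt.coeff (k - e) = 0 := hcoeffQt _ (by omega)
          rw [coeff_sub, coeff_sub, coeff_sub, h1, coeff_C_mul, hXe, h2, h2e]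
          ring
  obtain ⟨Qt, hQd, hQm, hQco⟩ := key m le_rfl
  have hQdeg : Qt.natDegree = m := by
    have h1 : Qt.degree = (m : WithBot ℕ) := by
      refine le_antisymm hQd ?_
      by_contra hcon
      push_neg at hcon
      have h0 : Qt.coeff m = 0 := coeff_eq_zero_of_degree_lt hcon
      rw [hQm] at h0
      exact hsa' h0
    exact natDegree_eq_of_degree_eq_some h1
  refine ⟨Qt, hQdeg, ?_, ?_⟩
  · rw [leadingCoeff, hQdeg, hQm]
  · rw [degree_lt_iff_coeff_zero]
    intro k hk
    exact hQco k (by omega)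




lemma int_sq_of_rat_sq (P : ℤ[X]) (q : ℚ[X])
    (h : P.map (algebraMap ℤ ℚ) = q ^ 2) : ∃ Q : ℤ[X], P = Q ^ 2 := by
  have hinj : Function.Injective (algebraMap ℤ ℚ) := Int.cast_injective
  have hmapinj : Function.Injective (Polynomial.map (algebraMap ℤ ℚ)) :=
    Polynomial.map_injective _ hinj
  obtain ⟨b, hb⟩ := IsLocalization.integerNormalization_map_to_map (nonZeroDivisors ℤ) q
  set A : ℤ[X] := IsLocalization.integerNormalization (nonZeroDivisors ℤ) q with hA
  have hbne : (b : ℤ) ≠ 0 := nonZeroDivisors.coe_ne_zero b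
  have hbq : A.map (algebraMap ℤ ℚ) = C ((b : ℤ) : ℚ) * q := by
    rw [hb, show ((b : ℤ) • q) = ((b : ℤ) : ℚ) • q from (algebraMap_smul ℚ _ _).symm,
      smul_eq_C_mul]
  by_cases hq0 : q = 0
  · refine ⟨0, hmapinj ?_⟩
    rw [h, hq0]
    simp
  have key : A ^ 2 = C ((b : ℤ) ^ 2) * P := by
    apply hmapinj
    rw [Polynomial.map_mul, Polynomial.map_pow, hbq, Polynomial.map_C, h, eq_intCast]
    push_cast
    rw [C_pow]
    ring
  have hA0 : A ≠ 0 := by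
    intro h0
    apply hq0
    have h1 := hbq
    rw [h0, Polynomial.map_zero] at h1
    rcases mul_eq_zero.mp h1.symm with h2 | h2
    · exact absurd (by exact_mod_cast C_eq_zero.mp h2) hbne
    · exact h2
  have hcont : A.content * A.content = (b : ℤ) ^ 2 * P.content := by
    have h2 := congrArg Polynomial.content key
    rwa [sq, content_mul, content_C_mul, Int.normalize_of_nonneg (by positivity)] at h2
  have hdvd : (b : ℤ) ∣ A.content := by
    rw [← Int.pow_dvd_pow_iff (two_ne_zero),
      show A.content ^ 2 = (b : ℤ) ^ 2 * P.content by rw [sq, hcont]]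
    exact Dvd.intro _ rfl
  obtain ⟨c, hc⟩ := hdvd
  have hPcont : P.content = c ^ 2 := by
    have h3 : (b : ℤ) ^ 2 * c ^ 2 = (b : ℤ) ^ 2 * P.content := by
      rw [← hcont, hc]; ring
    exact (mul_left_cancel₀ (pow_ne_zero 2 hbne) h3).symm
  have hAcont : A.content ≠ 0 := by rwa [Ne, content_eq_zero_iff]
  have t1 : C (A.content ^ 2) * A.primPart ^ 2 = A ^ 2 := by
    rw [C_pow, ← mul_pow, ← eq_C_content_mul_primPart]
  have t2 : A ^ 2 = C (A.content ^ 2) * P.primPart := by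
    rw [key]
    conv_lhs => rw [eq_C_content_mul_primPart P]
    rw [hPcont, hc, ← mul_assoc, ← C_mul,
      show (b : ℤ) ^ 2 * c ^ 2 = ((b : ℤ) * c) ^ 2 by ring]
  have hprim : A.primPart ^ 2 = P.primPart :=
    mul_left_cancel₀ (by simpa using pow_ne_zero 2 hAcont) (t1.trans t2)
  refine ⟨C c * A.primPart, ?_⟩
  rw [mul_pow, ← C_pow, hprim, ← hPcont, ← eq_C_content_mul_primPart]





lemma even_case (P : ℤ[X]) (m : ℕ) (hm : 0 < m) (hdeg : P.natDegree = 2 * m)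
    (N : ℕ) (hN : ∀ n : ℕ, N ≤ n → ∃ k : ℤ, P.eval (n : ℤ) = k ^ 2) :
    ∃ Q : ℤ[X], P = Q ^ 2 := by
  classical
  have hP0 : P ≠ 0 := by
    intro h
    rw [h, natDegree_zero] at hdeg
    omega
  set p : ℝ[X] := P.map (algebraMap ℤ ℝ) with hp
  have hinj : Function.Injective (algebraMap ℤ ℝ) := Int.cast_injective
  have hpdeg : p.natDegree = 2 * m := by
    rw [hp, natDegree_map_eq_of_injective hinj, hdeg]
  have hp0 : p ≠ 0 := (Polynomial.map_ne_zero_iff hinj).mpr hP0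
  have hplc : p.leadingCoeff = ((P.leadingCoeff : ℤ) : ℝ) := by
    rw [hp, leadingCoeff, natDegree_map_eq_of_injective hinj, coeff_map, leadingCoeff]
    rfl
  have hev : ∀ n : ℕ, p.eval ((n : ℕ) : ℝ) = ((P.eval ((n : ℕ) : ℤ) : ℤ) : ℝ) := by
    intro n
    rw [hp, eval_map, show ((n : ℕ) : ℝ) = (((n : ℕ) : ℤ) : ℝ) by push_cast; ring,
      eval₂_at_intCast]
    rfl
  -- leading coefficient is positive
  have ha : 0 < P.leadingCoeff := by
    by_contra hcon
    push_neg at hcon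
    have hlc0 : p.leadingCoeff ≤ 0 := by rw [hplc]; exact_mod_cast hcon
    have hdpos : 0 < p.degree := by
      rw [← natDegree_pos_iff_degree_pos, hpdeg]; omega
    have htb : Tendsto (fun n : ℕ => p.eval ((n : ℕ) : ℝ)) atTop atBot :=
      (tendsto_atBot_of_leadingCoeff_nonpos p hdpos hlc0).comp tendsto_natCast_atTop_atTop
    have hge : ∀ᶠ n : ℕ in atTop, 0 ≤ p.eval ((n : ℕ) : ℝ) := by
      filter_upwards [eventually_ge_atTop N] with n hn
      obtain ⟨k, hk⟩ := hN n hn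
      rw [hev n, hk]
      positivity
    obtain ⟨n, h1, h2⟩ := ((htb.eventually (eventually_le_atBot (-1 : ℝ))).and hge).exists
    linarith
  have hpa : 0 < p.leadingCoeff := by rw [hplc]; exact_mod_cast ha
  -- approximation polynomial
  obtain ⟨Qt, hQdeg, hQlc, hQapprox⟩ := exists_sqrt_approx p m hm hpdeg hpa
  have hQt0 : Qt ≠ 0 := by
    intro h
    rw [h, natDegree_zero] at hQdeg
    omega
  have hQtdeg : Qt.degree = (m : WithBot ℕ) := by
    rw [degree_eq_natDegree hQt0, hQdeg]
  have hQlcpos : 0 < Qt.leadingCoeff := by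
    rw [hQlc]
    exact Real.sqrt_pos.mpr hpa
  -- integer square roots
  have hgex : ∀ n : ℕ, ∃ gn : ℤ, 0 ≤ gn ∧ (N ≤ n → gn ^ 2 = P.eval (n : ℤ)) := by
    intro n
    by_cases hn : N ≤ n
    · obtain ⟨k, hk⟩ := hN n hn
      exact ⟨|k|, abs_nonneg k, fun _ => by rw [sq_abs, hk]⟩
    · exact ⟨0, le_rfl, fun h => absurd h hn⟩
  choose g hg0 hgsq using hgex
  set v : ℕ → ℝ := fun n => ((g n : ℤ) : ℝ) with hv
  -- the error sequence tends to zero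
  have hu : Tendsto (fun n : ℕ => v n - Qt.eval ((n : ℕ) : ℝ)) atTop (nhds 0) := by
    have hRQ : Tendsto (fun x : ℝ => (p - Qt ^ 2).eval x / Qt.eval x) atTop (nhds 0) :=
      div_tendsto_zero_of_degree_lt _ _ (by rw [hQtdeg]; exact hQapprox)
    have hRQ' : Tendsto (fun n : ℕ => |(p - Qt ^ 2).eval ((n : ℕ) : ℝ) / Qt.eval ((n : ℕ) : ℝ)|)
        atTop (nhds 0) := by
      have h1 := (hRQ.comp tendsto_natCast_atTop_atTop).abs
      simpa [Function.comp] using h1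
    apply squeeze_zero_norm' _ hRQ'
    have hQtop : Tendsto (fun x : ℝ => Qt.eval x) atTop atTop :=
      tendsto_atTop_of_leadingCoeff_nonneg Qt
        (by rw [hQtdeg]; exact_mod_cast wb_lt hm) hQlcpos.le
    have hQev : ∀ᶠ n : ℕ in atTop, 0 < Qt.eval ((n : ℕ) : ℝ) :=
      (hQtop.comp tendsto_natCast_atTop_atTop).eventually_gt_atTop 0
    filter_upwards [hQev, eventually_ge_atTop N] with n hQpos hn
    have hvsq : v n ^ 2 = p.eval ((n : ℕ) : ℝ) := by
      show ((g n : ℤ) : ℝ) ^ 2 = p.eval ((n : ℕ) : ℝ)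
      rw [hev n]
      exact_mod_cast hgsq n hn
    have hvnn : 0 ≤ v n := by
      show (0 : ℝ) ≤ ((g n : ℤ) : ℝ)
      exact_mod_cast hg0 n
    have hkey : (v n - Qt.eval ((n : ℕ) : ℝ)) * (v n + Qt.eval ((n : ℕ) : ℝ))
        = (p - Qt ^ 2).eval ((n : ℕ) : ℝ) := by
      rw [eval_sub, eval_pow, ← hvsq]
      ring
    have hpos : 0 < v n + Qt.eval ((n : ℕ) : ℝ) := by linarith
    have habs : |v n - Qt.eval ((n : ℕ) : ℝ)|
        = |(p - Qt ^ 2).eval ((n : ℕ) : ℝ)| / (v n + Qt.eval ((n : ℕ) : ℝ)) := by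
      rw [← hkey, abs_mul, abs_of_pos hpos, mul_div_cancel_right₀ _ (ne_of_gt hpos)]
    have hbound : |(p - Qt ^ 2).eval ((n : ℕ) : ℝ)| / (v n + Qt.eval ((n : ℕ) : ℝ))
        ≤ |(p - Qt ^ 2).eval ((n : ℕ) : ℝ)| / |Qt.eval ((n : ℕ) : ℝ)| := by
      rw [abs_of_pos hQpos]
      apply div_le_div_of_nonneg_left (abs_nonneg _) hQpos
      linarith
    calc ‖v n - Qt.eval ((n : ℕ) : ℝ)‖
        = |v n - Qt.eval ((n : ℕ) : ℝ)| := rfl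
      _ ≤ |(p - Qt ^ 2).eval ((n : ℕ) : ℝ)| / |Qt.eval ((n : ℕ) : ℝ)| := by
          rw [habs]; exact hbound
      _ = |(p - Qt ^ 2).eval ((n : ℕ) : ℝ) / Qt.eval ((n : ℕ) : ℝ)| := (abs_div _ _).symm
  -- shifted polynomial
  set Qt' : ℝ[X] := Qt.comp (X + C (N : ℝ)) with hQt'
  have hQt'ev : ∀ n : ℕ, Qt'.eval ((n : ℕ) : ℝ) = Qt.eval (((n + N : ℕ) : ℕ) : ℝ) := by
    intro n
    rw [hQt', eval_comp, eval_add, eval_X, eval_C]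
    congr 1
    push_cast
    ring
  have hQt'nd : Qt'.natDegree = m := by
    rw [hQt', natDegree_comp, hQdeg, natDegree_X_add_C, mul_one]
  have hQt'deg : Qt'.degree < ((m + 1 : ℕ) : WithBot ℕ) :=
    lt_of_le_of_lt (degree_le_natDegree.trans (by rw [hQt'nd])) (wb_lt (Nat.lt_succ_self m))
  have hwdecomp : (fun n : ℕ => v (n + N))
      = (fun n : ℕ => Qt'.eval ((n : ℕ) : ℝ))
        + (fun n : ℕ => v (n + N) - Qt.eval (((n + N : ℕ) : ℕ) : ℝ)) := by
    funext n
    simp only [Pi.add_apply, hQt'ev n]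
    ring
  have hΔ1 : (fwdDiff 1)^[m + 1] (fun n : ℕ => Qt'.eval ((n : ℕ) : ℝ)) = fun _ => 0 := by
    rw [fwdDiff_iter_eval, dPoly_iter_eq_zero (m + 1) Qt' hQt'deg]
    funext n
    simp
  have hΔ2 : Tendsto ((fwdDiff 1)^[m + 1] (fun n : ℕ => v (n + N))) atTop (nhds 0) := by
    rw [hwdecomp, fwdDiff_iter_add, hΔ1,
      show (fun _ : ℕ => (0 : ℝ)) = (0 : ℕ → ℝ) from rfl, zero_add]
    exact tendsto_fwdDiff_iter_zero _ (m + 1) (hu.comp (tendsto_add_atTop_nat N))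
  set G : ℕ → ℤ := fun n => g (n + N) with hG
  have hGcast : (fun n => (((fwdDiff 1)^[m + 1] G n : ℤ) : ℝ))
      = (fwdDiff 1)^[m + 1] (fun n : ℕ => v (n + N)) := fwdDiff_iter_intCast G (m + 1)
  obtain ⟨M, hM⟩ : ∃ M, ∀ n, M ≤ n → (fwdDiff 1)^[m + 1] G n = 0 := by
    have h1 : Tendsto (fun n => (((fwdDiff 1)^[m + 1] G n : ℤ) : ℝ)) atTop (nhds 0) := by
      rw [hGcast]; exact hΔ2
    have h2 : ∀ᶠ n in atTop, |(((fwdDiff 1)^[m + 1] G n : ℤ) : ℝ)| < 1 := by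
      have h3 := h1.eventually (Metric.ball_mem_nhds (0 : ℝ) one_pos)
      filter_upwards [h3] with n hn
      simpa [Real.dist_eq] using hn
    obtain ⟨M, hM⟩ := h2.exists_forall_of_atTop
    exact ⟨M, fun n hn => Int.abs_lt_one_iff.mp (by exact_mod_cast hM n hn)⟩
  -- Newton series
  set c : ℕ → ℤ := fun i => (fwdDiff 1)^[i] G M with hc
  have hczero : ∀ i, m + 1 ≤ i → c i = 0 := by
    intro i hi
    show (fwdDiff 1)^[i] G M = 0
    rw [show i = (i - (m + 1)) + (m + 1) by omega, Function.iterate_add_apply]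
    exact fwdDiff_iter_eventually_zero _ M _ hM M le_rfl
  have hGnewton : ∀ n : ℕ, G (M + n) = ∑ i ∈ Finset.range (m + 1), (n.choose i : ℤ) * c i := by
    intro n
    have h1 := shift_eq_sum_fwdDiff_iter 1 G n M
    rw [smul_eq_mul, mul_one] at h1
    rw [h1]
    have h2 : ∀ k ∈ Finset.range (n + 1), n.choose k • (fwdDiff 1)^[k] G M
        = (n.choose k : ℤ) * c k := by
      intro k _
      rw [nsmul_eq_mul, hc]
    rw [Finset.sum_congr rfl h2]
    rcases le_total (n + 1) (m + 1) with hnm | hnm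
    · refine Finset.sum_subset (Finset.range_subset_range.mpr hnm) ?_
      intro x _ hnx
      simp only [Finset.mem_range, not_lt] at hnx
      rw [Nat.choose_eq_zero_of_lt (by omega)]
      simp
    · refine (Finset.sum_subset (Finset.range_subset_range.mpr hnm) ?_).symm
      intro x _ hnx
      simp only [Finset.mem_range, not_lt] at hnx
      rw [hczero x (by omega)]
      ring
  -- the rational polynomial
  set q1 : ℚ[X] := ∑ i ∈ Finset.range (m + 1),
    C ((c i : ℚ) / (Nat.factorial i : ℚ)) * descPochhammer ℚ i with hq1
  have hq1ev : ∀ n : ℕ, q1.eval ((n : ℕ) : ℚ) = ((G (M + n) : ℤ) : ℚ) := by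
    intro n
    rw [hq1, eval_finset_sum, hGnewton n]
    push_cast
    apply Finset.sum_congr rfl
    intro i _
    rw [eval_mul, eval_C, descPochhammer_eval_eq_descFactorial]
    have hfac : ((n.descFactorial i : ℕ) : ℚ) = (Nat.factorial i : ℚ) * (n.choose i : ℚ) := by
      exact_mod_cast congrArg (fun z : ℕ => (z : ℚ)) (Nat.descFactorial_eq_factorial_mul_choose n i)
    rw [hfac]
    have hfac0 : (Nat.factorial i : ℚ) ≠ 0 := by
      exact_mod_cast Nat.factorial_ne_zero i
    field_simp
  set q2 : ℚ[X] := q1.comp (X - C ((N + M : ℕ) : ℚ)) with hq2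
  have hq2ev : ∀ n : ℕ, q2.eval (((N + M + n : ℕ) : ℕ) : ℚ) = q1.eval ((n : ℕ) : ℚ) := by
    intro n
    rw [hq2, eval_comp, eval_sub, eval_X, eval_C]
    congr 1
    push_cast
    ring
  have hevQ : ∀ n : ℕ, (P.map (algebraMap ℤ ℚ)).eval ((n : ℕ) : ℚ)
      = ((P.eval ((n : ℕ) : ℤ) : ℤ) : ℚ) := by
    intro n
    rw [eval_map, show ((n : ℕ) : ℚ) = (((n : ℕ) : ℤ) : ℚ) by push_cast; ring,
      eval₂_at_intCast]
    rfl
  have hPq : P.map (algebraMap ℤ ℚ) = q2 ^ 2 := by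
    apply eq_of_infinite_eval_eq
    apply Set.infinite_of_injective_forall_mem
      (f := fun n : ℕ => ((N + M + n : ℕ) : ℚ))
    · intro a b hab
      simp only [Nat.cast_inj] at hab
      omega
    · intro n
      show (P.map (algebraMap ℤ ℚ)).eval _ = (q2 ^ 2).eval _
      rw [hevQ (N + M + n), eval_pow, hq2ev n, hq1ev n]
      have hsq : g (N + M + n) ^ 2 = P.eval ((N + M + n : ℕ) : ℤ) :=
        hgsq (N + M + n) (by omega)
      have hGg : G (M + n) = g (N + M + n) := by
        show g (M + n + N) = g (N + M + n)
        congr 1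
        omega
      rw [← hsq, hGg]
      push_cast
      ring
  exact int_sq_of_rat_sq P q2 hPq





theorem stmt_12 (P : ℤ[X]) (hP : 0 < P.natDegree)
    (h : ∃ N : ℕ, ∀ n : ℕ, N ≤ n → ∃ k : ℤ, P.eval (n : ℤ) = k ^ 2) :
    ∃ Q : ℤ[X], P = Q ^ 2 := by
  obtain ⟨N, hN⟩ := h
  have hP0 : P ≠ 0 := by
    intro h0
    rw [h0, natDegree_zero] at hP
    omega
  have hP2deg : (P.comp (X ^ 2)).natDegree = 2 * P.natDegree := by
    rw [natDegree_comp, natDegree_X_pow]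
    ring
  have hP2sq : ∀ n : ℕ, N ≤ n → ∃ k : ℤ, (P.comp (X ^ 2)).eval (n : ℤ) = k ^ 2 := by
    intro n hn
    have h1 : n ≤ n * n := by
      rcases Nat.eq_zero_or_pos n with h2 | h2
      · simp [h2]
      · exact Nat.le_mul_of_pos_left n h2
    obtain ⟨k, hk⟩ := hN (n * n) (le_trans hn h1)
    refine ⟨k, ?_⟩
    rw [eval_comp, eval_pow, eval_X,
      show ((n : ℤ)) ^ 2 = ((n * n : ℕ) : ℤ) by push_cast; ring]
    exact hk
  obtain ⟨Q, hQ⟩ := even_case (P.comp (X ^ 2)) P.natDegree hP hP2deg N hP2sq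
  -- even/odd decomposition of Q
  set T : ℤ[X] := ∑ i ∈ Finset.range (Q.natDegree + 1), C (Q.coeff (2 * i)) * X ^ i with hT
  set S : ℤ[X] := ∑ i ∈ Finset.range (Q.natDegree + 1), C (Q.coeff (2 * i + 1)) * X ^ i with hS
  have hTc : ∀ i, T.coeff i = Q.coeff (2 * i) := by
    intro i
    rw [hT, finset_sum_coeff]
    simp only [coeff_C_mul, coeff_X_pow]
    rcases lt_or_ge i (Q.natDegree + 1) with hi | hi
    · rw [Finset.sum_eq_single i]
      · simp
      · intro b _ hb
        rw [if_neg (fun hc => hb hc.symm), mul_zero]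
      · intro hni
        exact absurd (Finset.mem_range.mpr hi) hni
    · rw [Finset.sum_eq_zero, eq_comm]
      · apply coeff_eq_zero_of_natDegree_lt
        omega
      · intro b hb
        rw [Finset.mem_range] at hb
        rw [if_neg (by omega : ¬ i = b), mul_zero]
  have hSc : ∀ i, S.coeff i = Q.coeff (2 * i + 1) := by
    intro i
    rw [hS, finset_sum_coeff]
    simp only [coeff_C_mul, coeff_X_pow]
    rcases lt_or_ge i (Q.natDegree + 1) with hi | hi
    · rw [Finset.sum_eq_single i]
      · simp
      · intro b _ hb
        rw [if_neg (fun hc => hb hc.symm), mul_zero]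
      · intro hni
        exact absurd (Finset.mem_range.mpr hi) hni
    · rw [Finset.sum_eq_zero, eq_comm]
      · apply coeff_eq_zero_of_natDegree_lt
        omega
      · intro b hb
        rw [Finset.mem_range] at hb
        rw [if_neg (by omega : ¬ i = b), mul_zero]
  have hXmul : ∀ (A : ℤ[X]) (k : ℕ), (X * A).coeff k = if k = 0 then 0 else A.coeff (k - 1) := by
    intro A k
    rcases k with _ | k
    · simp [mul_comm]
    · rw [coeff_X_mul]
      simp
  have hQdecomp : Q = expand ℤ 2 T + X * expand ℤ 2 S := by
    ext k
    rw [coeff_add, coeff_expand two_pos, hXmul]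
    rcases Nat.even_or_odd k with ⟨i, hk⟩ | ⟨i, hk⟩
    · subst hk
      rw [if_pos ⟨i, by ring⟩, show (i + i) / 2 = i by omega, hTc]
      rcases Nat.eq_zero_or_pos i with h2 | h2
      · simp [h2]
      · rw [if_neg (by omega : ¬ i + i = 0), coeff_expand two_pos,
          if_neg (by omega : ¬ 2 ∣ (i + i - 1))]
        rw [show 2 * i = i + i by ring]
        ring
    · subst hk
      rw [if_neg (by omega : ¬ 2 ∣ (2 * i + 1)), if_neg (by omega : ¬ 2 * i + 1 = 0),
        coeff_expand two_pos, if_pos ⟨i, by omega⟩, show (2 * i + 1 - 1) / 2 = i by omega, hSc]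
      ring
  -- compare even and odd parts of (expand 2 P) = Q ^ 2
  have hkey : expand ℤ 2 P = expand ℤ 2 (T ^ 2 + X * S ^ 2) + X * expand ℤ 2 (2 * T * S) := by
    rw [expand_eq_comp_X_pow, hQ, hQdecomp]
    simp only [map_add, map_mul, map_pow, expand_X, map_ofNat]
    ring
  have hTS : T * S = 0 := by
    have h2 : (2 : ℤ[X]) * (T * S) = 0 := by
      ext i
      have h3 := congrArg (fun r : ℤ[X] => r.coeff (2 * i + 1)) hkey
      rw [coeff_expand two_pos, if_neg (by omega : ¬ 2 ∣ (2 * i + 1)), coeff_add,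
        coeff_expand two_pos, if_neg (by omega : ¬ 2 ∣ (2 * i + 1)), hXmul,
        if_neg (by omega : ¬ 2 * i + 1 = 0), coeff_expand two_pos,
        if_pos ⟨i, by omega⟩, show (2 * i + 1 - 1) / 2 = i by omega, zero_add] at h3
      rw [show (2 : ℤ[X]) * (T * S) = 2 * T * S by ring, ← h3, coeff_zero]
    rcases mul_eq_zero.mp h2 with h3 | h3
    · exact absurd h3 two_ne_zero
    · exact h3
  have hPdecomp : P = T ^ 2 + X * S ^ 2 := by
    ext i
    have h3 := congrArg (fun r : ℤ[X] => r.coeff (2 * i)) hkey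
    rw [coeff_expand two_pos, if_pos ⟨i, by ring⟩, Nat.mul_div_cancel_left i two_pos, coeff_add,
      coeff_expand two_pos, if_pos ⟨i, by ring⟩, Nat.mul_div_cancel_left i two_pos, hXmul] at h3
    rcases Nat.eq_zero_or_pos i with h2 | h2
    · subst h2
      simpa using h3
    · rw [if_neg (by omega : ¬ 2 * i = 0), coeff_expand two_pos,
        if_neg (by omega : ¬ 2 ∣ (2 * i - 1))] at h3
      simpa using h3
  rcases mul_eq_zero.mp hTS with hT0 | hS0
  · -- T = 0 : P = X * S^2, contradiction with square values at primes
    exfalso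
    rw [hT0] at hPdecomp
    have hPX : P = X * S ^ 2 := by simpa using hPdecomp
    have hS0' : S ≠ 0 := by
      intro h0
      rw [h0] at hPX
      simp at hPX
      exact hP0 hPX
    have hfin : {x : ℕ | S.eval ((x : ℕ) : ℤ) = 0}.Finite := by
      have hinj : Function.Injective (fun n : ℕ => (n : ℤ)) := fun a b hab => by simpa using hab
      exact Set.Finite.preimage hinj.injOn (finite_setOf_isRoot hS0')
    have hinf : ({x : ℕ | x.Prime} \ {x : ℕ | S.eval ((x : ℕ) : ℤ) = 0}).Infinite :=
      Nat.infinite_setOf_prime.diff hfin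
    obtain ⟨q, hq, hqN⟩ := hinf.exists_gt N
    have hqprime : q.Prime := hq.1
    have hqs : S.eval ((q : ℕ) : ℤ) ≠ 0 := hq.2
    obtain ⟨k, hk⟩ := hN q (le_of_lt hqN)
    rw [hPX, eval_mul, eval_X, eval_pow] at hk
    set s : ℤ := S.eval ((q : ℕ) : ℤ) with hs
    -- (q : ℤ) * s ^ 2 = k ^ 2, q prime, s ≠ 0 : contradiction via irrationality of sqrt q
    have hirr := hqprime.irrational_sqrt
    apply hirr
    refine ⟨|(k : ℚ) / (s : ℚ)|, ?_⟩
    have hsR : ((s : ℤ) : ℝ) ≠ 0 := by exact_mod_cast hqs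
    have hkq : ((k : ℤ) : ℝ) ^ 2 = (q : ℝ) * ((s : ℤ) : ℝ) ^ 2 := by
      exact_mod_cast congrArg (fun z : ℤ => (z : ℝ)) hk.symm
    have h4 : (((k : ℤ) : ℝ) / ((s : ℤ) : ℝ)) ^ 2 = (q : ℝ) := by
      rw [div_pow, hkq]
      field_simp
    rw [← h4, Real.sqrt_sq_eq_abs]
    push_cast
    rw [abs_div]
  · -- S = 0 : P = T^2
    rw [hS0] at hPdecomp
    exact ⟨T, by simpa using hPdecomp⟩


end SquarePoly
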